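/- (a) For every r_3 ∈ {0,1} with P(R_3 = r_3) > 0, P(R_2 = 1 | R_3 = r_3) = f_2(1; r_3). (b) Define φ(x, r_1, r_3) := p(x, r_1, 1, r_3) / f_2(1; r_3) (the law obtained by fixing R_2 to one). Then φ is a probability mass function on 𝒳 × {0,1}², and under (X, R_1, R_3) distributed according to φ, the indicators R_1 and R_3 are conditionally independent given X_1: for every x_1 with positive φ-probability of {X_1 = x_1} and all r_1, r_3 ∈ {0,1}, P_φ(R_1 = r_1, R_3 = r_3 | X_1 = x_1) = P_φ(R_1 = r_1 | X_1 = x_1) · P_φ(R_3 = r_3 | X_1 = x_1). Moreover, for every x_1 with P_φ(X_1 = x_1, R_1 = 1) > 0, P_φ(R_3 = 1 | X_1 = x_1, R_1 = 1) = f_3(1; x_1), and f_3(1; x_1) = P(R_3 = 1 | X_1 = x_1) whenever P(X_1 = x_1) > 0; hence the propensity score of R_3 is identified by intervening on R_2. -/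

import Mathlib

open Finset

/-- Three-variable model with an admissible descendant intervention
(graph `X₁ → R₃, R₃ → R₂, R₂ → R₁, X₃ → R₁`):
(a) the propensity score of `R₂` given `R₃` equals `f₂`;
(b) fixing `R₂` to one yields a probability mass function `φ` under which `R₁`
and `R₃` are conditionally independent given `X₁`, the `φ`-conditional of
`R₃ = 1` given `X₁` and `R₁ = 1` equals `f₃(1; x₁)`, and `f₃(1; x₁)` equals the
propensity score `P(R₃ = 1 | X₁ = x₁)`; hence the propensity score of `R₃` is
identified by intervening on `R₂`. -/
theorem stmt_14
    (X1 X2 X3 : Type) [Fintype X1] [Fintype X2] [Fintype X3]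
    [Nonempty X1] [Nonempty X2] [Nonempty X3]
    (q : X1 → X2 → X3 → ℝ) (hq0 : ∀ a b c, 0 ≤ q a b c)
    (hq1 : (∑ a, ∑ b, ∑ c, q a b c) = 1)
    (f3 : Bool → X1 → ℝ) (f2 : Bool → Bool → ℝ) (f1 : Bool → X3 → Bool → ℝ)
    (hf30 : ∀ b a, 0 ≤ f3 b a) (hf3sum : ∀ a, f3 false a + f3 true a = 1)
    (hf20 : ∀ b r, 0 ≤ f2 b r) (hf2sum : ∀ r, f2 false r + f2 true r = 1)
    (hf2pos : ∀ r3 : Bool, 0 < f2 true r3)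
    (hf10 : ∀ b c r, 0 ≤ f1 b c r) (hf1sum : ∀ c r, f1 false c r + f1 true c r = 1)
    (p : X1 → X2 → X3 → Bool → Bool → Bool → ℝ)
    (hp : ∀ a b c r1 r2 r3, p a b c r1 r2 r3 = q a b c * f3 r3 a * f2 r2 r3 * f1 r1 c r2)
    (φ : X1 → X2 → X3 → Bool → Bool → ℝ)
    (hφ : ∀ a b c r1 r3, φ a b c r1 r3 = p a b c r1 true r3 / f2 true r3) :
    -- (a) P(R₂ = 1 | R₃ = r₃) = f₂(1; r₃)
    (∀ r3 : Bool,
      0 < (∑ a, ∑ b, ∑ c, ∑ r1, ∑ r2, p a b c r1 r2 r3) →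
      (∑ a, ∑ b, ∑ c, ∑ r1, p a b c r1 true r3)
        / (∑ a, ∑ b, ∑ c, ∑ r1, ∑ r2, p a b c r1 r2 r3) = f2 true r3)
    ∧
    -- (b) φ is a probability mass function
    ((∑ a, ∑ b, ∑ c, ∑ r1, ∑ r3, φ a b c r1 r3) = 1)
    ∧
    -- under φ, R₁ ⫫ R₃ | X₁
    (∀ a : X1,
      0 < (∑ b, ∑ c, ∑ r1, ∑ r3, φ a b c r1 r3) →
      ∀ r1 r3 : Bool,
        (∑ b, ∑ c, φ a b c r1 r3) / (∑ b, ∑ c, ∑ u, ∑ v, φ a b c u v)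
          = ((∑ b, ∑ c, ∑ v, φ a b c r1 v) / (∑ b, ∑ c, ∑ u, ∑ v, φ a b c u v))
            * ((∑ b, ∑ c, ∑ u, φ a b c u r3) / (∑ b, ∑ c, ∑ u, ∑ v, φ a b c u v)))
    ∧
    -- P_φ(R₃ = 1 | X₁ = x₁, R₁ = 1) = f₃(1; x₁)
    (∀ a : X1,
      0 < (∑ b, ∑ c, ∑ r3, φ a b c true r3) →
      (∑ b, ∑ c, φ a b c true true) / (∑ b, ∑ c, ∑ r3, φ a b c true r3) = f3 true a)
    ∧
    -- f₃(1; x₁) = P(R₃ = 1 | X₁ = x₁)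
    (∀ a : X1,
      0 < (∑ b, ∑ c, ∑ r1, ∑ r2, ∑ r3, p a b c r1 r2 r3) →
      (∑ b, ∑ c, ∑ r1, ∑ r2, p a b c r1 r2 true)
        / (∑ b, ∑ c, ∑ r1, ∑ r2, ∑ r3, p a b c r1 r2 r3) = f3 true a) := by
  -- pointwise simplification of φ
  have eφ : ∀ a b c r1 r3, φ a b c r1 r3 = f3 r3 a * (q a b c * f1 r1 c true) := by
    intro a b c r1 r3
    rw [hφ, hp]
    field_simp [(hf2pos r3).ne']
  -- sum over r3
  have e1 : ∀ a b c r1, (∑ r3, φ a b c r1 r3) = q a b c * f1 r1 c true := by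
    intro a b c r1
    simp only [Fintype.sum_bool, eφ]
    linear_combination (q a b c * f1 r1 c true) * hf3sum a
  -- sum over r1
  have e3 : ∀ a b c r3, (∑ r1, φ a b c r1 r3) = f3 r3 a * q a b c := by
    intro a b c r3
    simp only [Fintype.sum_bool, eφ]
    linear_combination (f3 r3 a * q a b c) * hf1sum c true
  -- sum over r1, r3
  have e2 : ∀ a b c, (∑ r1, ∑ r3, φ a b c r1 r3) = q a b c := by
    intro a b c
    simp only [e1, Fintype.sum_bool]
    linear_combination (q a b c) * hf1sum c true
  -- p sums
  have e6 : ∀ a b c r3, (∑ r1, p a b c r1 true r3) = f2 true r3 * (f3 r3 a * q a b c) := by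
    intro a b c r3
    simp only [Fintype.sum_bool, hp]
    linear_combination (q a b c * f3 r3 a * f2 true r3) * hf1sum c true
  have e4 : ∀ a b c r3, (∑ r1, ∑ r2, p a b c r1 r2 r3) = f3 r3 a * q a b c := by
    intro a b c r3
    simp only [Fintype.sum_bool, hp]
    linear_combination (q a b c * f3 r3 a * f2 true r3) * hf1sum c true
      + (q a b c * f3 r3 a * f2 false r3) * hf1sum c false
      + (q a b c * f3 r3 a) * hf2sum r3
  have e5 : ∀ a b c, (∑ r1, ∑ r2, ∑ r3, p a b c r1 r2 r3) = q a b c := by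
    intro a b c
    simp only [Fintype.sum_bool, hp]
    linear_combination (q a b c * f3 true a * f2 true true) * hf1sum c true
      + (q a b c * f3 true a * f2 false true) * hf1sum c false
      + (q a b c * f3 false a * f2 true false) * hf1sum c true
      + (q a b c * f3 false a * f2 false false) * hf1sum c false
      + (q a b c * f3 true a) * hf2sum true
      + (q a b c * f3 false a) * hf2sum false
      + (q a b c) * hf3sum a
  refine ⟨?_, ?_, ?_, ?_, ?_⟩
  · -- (a)
    intro r3 hpos
    simp only [e6, e4, ← Finset.mul_sum] at *
    rw [mul_div_assoc, div_self, mul_one]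
    · rintro h
      rw [h] at hpos
      simp at hpos
  · -- (b) pmf
    simp only [e2]
    exact hq1
  · -- (c) conditional independence
    intro a hpos r1 r3
    have hL1 : ∀ u v, (∑ b, ∑ c, φ a b c u v) = f3 v a * ∑ b, ∑ c, q a b c * f1 u c true := by
      intro u v
      simp only [eφ, ← Finset.mul_sum]
    have hN1 : ∀ u, (∑ b, ∑ c, ∑ v, φ a b c u v) = ∑ b, ∑ c, q a b c * f1 u c true := by
      intro u
      simp only [e1]
    have hN2 : ∀ v, (∑ b, ∑ c, ∑ u, φ a b c u v) = f3 v a * ∑ b, ∑ c, q a b c := by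
      intro v
      simp only [e3, ← Finset.mul_sum]
    have hD : (∑ b, ∑ c, ∑ u, ∑ v, φ a b c u v) = ∑ b, ∑ c, q a b c := by
      simp only [e2]
    rw [hL1, hN1, hN2, hD]
    have hQ : (0 : ℝ) < ∑ b, ∑ c, q a b c := by
      rw [hD] at hpos; exact hpos
    field_simp
  · -- (d)
    intro a hpos
    have hN1 : (∑ b, ∑ c, ∑ v, φ a b c true v) = ∑ b, ∑ c, q a b c * f1 true c true := by
      simp only [e1]
    have hL1 : (∑ b, ∑ c, φ a b c true true)
        = f3 true a * ∑ b, ∑ c, q a b c * f1 true c true := by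
      simp only [eφ, ← Finset.mul_sum]
    rw [hN1] at hpos ⊢
    rw [hL1, mul_div_assoc, div_self hpos.ne', mul_one]
  · -- (e)
    intro a hpos
    have hN : (∑ b, ∑ c, ∑ r1, ∑ r2, p a b c r1 r2 true)
        = f3 true a * ∑ b, ∑ c, q a b c := by
      simp only [e4, ← Finset.mul_sum]
    have hD : (∑ b, ∑ c, ∑ r1, ∑ r2, ∑ r3, p a b c r1 r2 r3) = ∑ b, ∑ c, q a b c := by
      simp only [e5]
    rw [hD] at hpos ⊢
    rw [hN, mul_div_assoc, div_self hpos.ne', mul_one]
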